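/- The class of finite triangle-free graphs is not a finite union of CSP languages: there is no finite set D of finite graphs such that a finite graph G is triangle-free if and only if G admits a homomorphism to some member of D. -/

import Mathlib

/-- The shift graph on `Fin m`: vertices are increasing pairs, and two pairs are
adjacent when the second coordinate of one equals the first coordinate of the other. -/
def shiftGraph (m : ℕ) : SimpleGraph {p : Fin m × Fin m // p.1 < p.2} where
  Adj p q := p.1.2 = q.1.1 ∨ q.1.2 = p.1.1
  symm := ⟨fun _ _ h => h.symm⟩
  loopless := ⟨fun p h => h.elim (fun e => p.2.ne' e) (fun e => p.2.ne' e)⟩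

lemma shiftGraph_triangleFree (m : ℕ) : (shiftGraph m).CliqueFree 3 := by
  intro s hs
  rw [SimpleGraph.is3Clique_iff] at hs
  obtain ⟨a, b, c, hab, hac, hbc, -⟩ := hs
  obtain ⟨⟨a1, a2⟩, ha⟩ := a
  obtain ⟨⟨b1, b2⟩, hb⟩ := b
  obtain ⟨⟨c1, c2⟩, hc⟩ := c
  simp only [shiftGraph, Fin.lt_def, Fin.ext_iff] at ha hb hc hab hac hbc
  omega

/-- the class of finite triangle-free graphs is not a finite union of CSP
languages: there is no finite family `H i` of finite graphs such that a finite graph `G` is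
triangle-free iff `G` admits a (graph) homomorphism to some `H i`. -/
theorem triangle_free_not_finite_union_of_csp :
    ¬ ∃ (ι : Type) (_ : Finite ι) (V : ι → Type) (_ : ∀ i, Finite (V i))
        (H : ∀ i : ι, SimpleGraph (V i)),
      ∀ (W : Type) (_ : Finite W) (G : SimpleGraph W),
        G.CliqueFree 3 ↔ ∃ i : ι, Nonempty (G →g H i) := by
  classical
  rintro ⟨ι, hι, V, hV, H, h⟩
  have : Fintype ι := Fintype.ofFinite ι
  -- choose m larger than 2 ^ |V i| for every i
  set m : ℕ := (Finset.univ.sup fun i : ι => 2 ^ Nat.card (V i)) + 1 with hm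
  have hG := (h _ inferInstance (shiftGraph m)).mp (shiftGraph_triangleFree m)
  obtain ⟨i, ⟨f⟩⟩ := hG
  have : Fintype (V i) := Fintype.ofFinite (V i)
  -- the color-set map
  set S : Fin m → Finset (V i) := fun x =>
    Finset.univ.filter fun v => ∃ y, ∃ h : x < y, f ⟨(x, y), h⟩ = v with hS
  have hcard : Fintype.card (Finset (V i)) < Fintype.card (Fin m) := by
    rw [Fintype.card_finset, Fintype.card_fin, hm]
    have := Finset.le_sup (f := fun i : ι => 2 ^ Nat.card (V i)) (Finset.mem_univ i)
    simp only [Nat.card_eq_fintype_card] at this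
    omega
  obtain ⟨x, y, hxy, hSxy⟩ := Fintype.exists_ne_map_eq_of_card_lt S hcard
  -- WLOG x < y
  wlog hlt : x < y generalizing x y
  · exact this y x hxy.symm hSxy.symm (by omega)
  have hmem : f ⟨(x, y), hlt⟩ ∈ S x := by
    simp only [hS, Finset.mem_filter, Finset.mem_univ, true_and]
    exact ⟨y, hlt, rfl⟩
  rw [hSxy] at hmem
  simp only [hS, Finset.mem_filter, Finset.mem_univ, true_and] at hmem
  obtain ⟨z, hyz, hfz⟩ := hmem
  have hadj : (shiftGraph m).Adj ⟨(x, y), hlt⟩ ⟨(y, z), hyz⟩ := Or.inl rfl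
  exact (H i).ne_of_adj (f.map_adj hadj) hfz.symm
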